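/- Let η be a configuration whose set U of unstable sites is finite and nonempty, with |U| = I. Then the number of bounded stable regions of η (maximal finite sets of consecutive stable sites {x, x+1, …, x+g} with σ_η(x−1) = σ_η(x+g+1) = 0) is at most I/3 − 1. -/

import Mathlib

open MeasureTheory ENNReal
open scoped Classical

/-- A configuration: a coloring of `ℤ` with the two colors coded by `Bool`. -/
abbrev Config := ℤ → Bool

/-- A site `x` is unstable in `η` iff it lies in a monochromatic chain of length (at least) 3,
i.e. there is `y ∈ {x-2, x-1, x}` with `η y = η (y+1) = η (y+2)`. Spelled out explicitly. -/
def Unstable (η : Config) (x : ℤ) : Prop :=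
  (η (x - 2) = η (x - 1) ∧ η (x - 1) = η x) ∨
  (η (x - 1) = η x ∧ η x = η (x + 1)) ∨
  (η x = η (x + 1) ∧ η (x + 1) = η (x + 2))

instance (η : Config) (x : ℤ) : Decidable (Unstable η x) := by
  unfold Unstable; infer_instance

/-- One step of the dynamics: stable sites keep their color, unstable ones are recolored
using the fresh colors `c`. -/
def update (η : Config) (c : ℤ → Bool) : Config :=
  fun x => if Unstable η x then c x else η x

/-- `evolve ω η k = R^k(η)`: the configuration after `k` steps, where the simultaneous
recoloring at step `j` uses the fresh colors `ω j`. -/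
def evolve (ω : ℕ → ℤ → Bool) (η : Config) : ℕ → Config
  | 0 => η
  | k + 1 => update (evolve ω η k) (ω k)

/-- `μ` makes the coordinates of the coin field i.i.d. uniform on the two colors:
every finite cylinder event has probability `(1/2)^(number of coordinates)`. -/
def IIDCoins (μ : Measure (ℕ → ℤ → Bool)) : Prop :=
  ∀ (S : Finset (ℕ × ℤ)) (f : ℕ × ℤ → Bool),
    μ {ω | ∀ p ∈ S, ω p.1 p.2 = f p} = (1 / 2 : ℝ≥0∞) ^ S.card

/-- The number of unstable sites of a configuration. -/
noncomputable def numUnstable (η : Config) : ℕ∞ := {x : ℤ | Unstable η x}.encard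

/-- `p_k^I`: sup over configurations `η` with site `0` unstable of `P(σ_{R^k(η)}(0) = 0)`. -/
noncomputable def pI (μ : Measure (ℕ → ℤ → Bool)) (k : ℕ) : ℝ≥0∞ :=
  ⨆ (η : Config) (_ : Unstable η 0), μ {ω | Unstable (evolve ω η k) 0}

/-- `p_k^{III}`: sup over configurations `η` with sites `-1, 0, 1` all unstable of
`P(σ_{R^k(η)}(0) = 0)`. -/
noncomputable def pIII (μ : Measure (ℕ → ℤ → Bool)) (k : ℕ) : ℝ≥0∞ :=
  ⨆ (η : Config) (_ : Unstable η (-1) ∧ Unstable η 0 ∧ Unstable η 1),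
    μ {ω | Unstable (evolve ω η k) 0}

/-- The conditioning event of `p_k^S(n,m)` (at site `0`): all sites `i` with `-n ≤ i ≤ m`
are stable, and the boundary sites `-n-1` (if `n` is finite) and `m+1` (if `m` is finite)
are unstable.  The inequality `-n ≤ i ≤ m` in `ℕ∞` is coded using `Int.toNat`. -/
def SWindow (η : Config) (n m : ℕ∞) : Prop :=
  (∀ i : ℤ, (((-i).toNat : ℕ∞) ≤ n) → ((i.toNat : ℕ∞) ≤ m) → ¬ Unstable η i) ∧
  (∀ nn : ℕ, n = (nn : ℕ∞) → Unstable η (-(nn : ℤ) - 1)) ∧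
  (∀ mm : ℕ, m = (mm : ℕ∞) → Unstable η ((mm : ℤ) + 1))

/-- `p_k^S(n,m)` for `n, m ∈ ℕ ∪ {∞}`: sup over configurations `η` satisfying the stable-window
condition of `P(σ_{R^k(η)}(0) = 0)`. -/
noncomputable def pS (μ : Measure (ℕ → ℤ → Bool)) (k : ℕ) (n m : ℕ∞) : ℝ≥0∞ :=
  ⨆ (η : Config) (_ : SWindow η n m), μ {ω | Unstable (evolve ω η k) 0}


lemma chain3 (η : Config) (y : ℤ) (h1 : η y = η (y+1)) (h2 : η (y+1) = η (y+2)) :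
    Unstable η y ∧ Unstable η (y+1) ∧ Unstable η (y+2) := by
  refine ⟨Or.inr (Or.inr ⟨h1, h2⟩), Or.inr (Or.inl ⟨?_, ?_⟩), Or.inl ⟨?_, ?_⟩⟩
  · rw [show y+1-1 = y by ring]; exact h1
  · rw [show y+1+1 = y+2 by ring]; exact h2
  · rw [show y+2-2 = y by ring, show y+2-1 = y+1 by ring]; exact h1
  · rw [show y+2-1 = y+1 by ring]; exact h2

lemma rkey (η : Config) (b : ℤ) (hb : ¬ Unstable η b) (h1 : Unstable η (b+1)) :
    Unstable η (b+2) ∧ Unstable η (b+3) := by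
  rcases h1 with ⟨h, h'⟩ | ⟨h, h'⟩ | ⟨h, h'⟩
  · simp only [show b+1-2 = b-1 from by ring, show b+1-1 = b from by ring] at h h'
    exact absurd (Or.inr (Or.inl ⟨h, h'⟩)) hb
  · simp only [show b+1-1 = b from by ring, show b+1+1 = b+2 from by ring] at h h'
    exact absurd (Or.inr (Or.inr ⟨h, h'⟩)) hb
  · simp only [show b+1+1 = b+2 from by ring, show b+1+2 = b+3 from by ring] at h h'
    have := chain3 η (b+1) (by rw [show b+1+1 = b+2 by ring]; exact h)
      (by rw [show b+1+1 = b+2 by ring, show b+1+2 = b+3 by ring]; exact h')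
    simp only [show b+1+1 = b+2 from by ring, show b+1+2 = b+3 from by ring] at this
    exact ⟨this.2.1, this.2.2⟩

lemma lkey (η : Config) (a : ℤ) (ha : ¬ Unstable η a) (h1 : Unstable η (a-1)) :
    Unstable η (a-2) ∧ Unstable η (a-3) := by
  rcases h1 with ⟨h, h'⟩ | ⟨h, h'⟩ | ⟨h, h'⟩
  · simp only [show a-1-2 = a-3 from by ring, show a-1-1 = a-2 from by ring] at h h'
    have := chain3 η (a-3) (by rw [show a-3+1 = a-2 by ring]; exact h)
      (by rw [show a-3+1 = a-2 by ring, show a-3+2 = a-1 by ring]; exact h')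
    rw [show a-3+1 = a-2 by ring] at this
    exact ⟨this.2.1, this.1⟩
  · simp only [show a-1-1 = a-2 from by ring, show a-1+1 = a from by ring] at h h'
    refine absurd (Or.inl ⟨?_, ?_⟩) ha
    · rw [show a-1 = a-1 by ring]; exact h
    · rw [show a-1 = a-1 by ring]; exact h'
  · simp only [show a-1+1 = a from by ring, show a-1+2 = a+1 from by ring] at h h'
    exact absurd (Or.inr (Or.inl ⟨h, h'⟩)) ha

/-- if the set of unstable sites is finite and nonempty with `I` elements, then
the number of bounded stable regions (maximal finite runs of stable sites, recorded by their
endpoints) is at most `I/3 - 1`. -/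
theorem bounded_stable_regions_count (η : Config)
    (hfin : {x : ℤ | Unstable η x}.Finite)
    (hne : {x : ℤ | Unstable η x}.Nonempty) :
    ({p : ℤ × ℤ | p.1 ≤ p.2 ∧ (∀ i : ℤ, p.1 ≤ i → i ≤ p.2 → ¬ Unstable η i) ∧
        Unstable η (p.1 - 1) ∧ Unstable η (p.2 + 1)}.ncard : ℝ) ≤
      ({x : ℤ | Unstable η x}.ncard : ℝ) / 3 - 1 := by
  classical
  set S := {p : ℤ × ℤ | p.1 ≤ p.2 ∧ (∀ i : ℤ, p.1 ≤ i → i ≤ p.2 → ¬ Unstable η i) ∧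
        Unstable η (p.1 - 1) ∧ Unstable η (p.2 + 1)} with hSdef
  -- injectivity of snd on S
  have sndInj : ∀ p ∈ S, ∀ q ∈ S, p.2 = q.2 → p = q := by
    intro p hp q hq hpq
    obtain ⟨hp1, hp2, hp3, hp4⟩ := hp
    obtain ⟨hq1, hq2, hq3, hq4⟩ := hq
    have hfst : p.1 = q.1 := by
      by_contra hne
      rcases lt_or_gt_of_ne hne with h | h
      · exact hp2 (q.1 - 1) (by omega) (by omega) hq3
      · exact hq2 (p.1 - 1) (by omega) (by omega) hp3
    exact Prod.ext hfst hpq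
  -- S is finite
  have hSfin : S.Finite := by
    have himg : (fun p : ℤ × ℤ => p.2 + 1) '' S ⊆ {x : ℤ | Unstable η x} := by
      rintro x ⟨p, hp, rfl⟩; exact hp.2.2.2
    refine Set.Finite.of_finite_image (hfin.subset himg) ?_
    intro p hp q hq h
    simp only at h
    exact sndInj p hp q hq (by omega)
  rcases Set.eq_empty_or_nonempty S with hS | hS
  · -- no bounded regions: need I ≥ 3
    rw [hS]
    simp only [Set.ncard_empty, Nat.cast_zero]
    obtain ⟨x, hx⟩ := hne
    have h3 : ∃ y : ℤ, Unstable η y ∧ Unstable η (y+1) ∧ Unstable η (y+2) := by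
      rcases hx with ⟨h, h'⟩ | ⟨h, h'⟩ | ⟨h, h'⟩
      · exact ⟨x - 2, chain3 η (x-2) (by rw [show x-2+1 = x-1 by ring]; exact h)
          (by rw [show x-2+1 = x-1 by ring, show x-2+2 = x by ring]; exact h')⟩
      · exact ⟨x - 1, chain3 η (x-1) (by rw [show x-1+1 = x by ring]; exact h)
          (by rw [show x-1+1 = x by ring, show x-1+2 = x+1 by ring]; exact h')⟩
      · exact ⟨x, chain3 η x h h'⟩
    obtain ⟨y, hy0, hy1, hy2⟩ := h3
    have hsub : ({y, y+1, y+2} : Set ℤ) ⊆ {x : ℤ | Unstable η x} := by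
      rintro z (rfl | rfl | rfl) <;> assumption
    have hcard : ({y, y+1, y+2} : Set ℤ).ncard = 3 := by
      rw [Set.ncard_insert_of_notMem (by simp only [Set.mem_insert_iff, Set.mem_singleton_iff]; omega), Set.ncard_insert_of_notMem (by simp only [Set.mem_singleton_iff]; omega),
        Set.ncard_singleton]
    have := Set.ncard_le_ncard hsub hfin
    rw [hcard] at this
    have : (3 : ℝ) ≤ ({x : ℤ | Unstable η x}.ncard : ℝ) := by exact_mod_cast this
    linarith
  · obtain ⟨p₀, hp₀, hmin⟩ := Set.exists_min_image S Prod.fst hSfin hS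
    set a₀ := p₀.1 with ha₀
    set F : Finset (ℤ × ℤ) := hSfin.toFinset with hF
    have hFmem : ∀ p, p ∈ F ↔ p ∈ S := fun p => hSfin.mem_toFinset
    set Bf : Finset ℤ := F.image Prod.snd with hBf
    set B' : Finset ℤ := insert (a₀ - 4) Bf with hB'
    -- facts about members of Bf
    have hBfS : ∀ b ∈ Bf, ∃ p ∈ S, p.2 = b := by
      intro b hb
      obtain ⟨p, hp, rfl⟩ := Finset.mem_image.mp hb
      exact ⟨p, (hFmem p).mp hp, rfl⟩
    have hBfge : ∀ b ∈ Bf, a₀ ≤ b := by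
      intro b hb
      obtain ⟨p, hp, rfl⟩ := hBfS b hb
      exact le_trans (hmin p hp) hp.1
    have hBfU : ∀ b ∈ Bf, Unstable η (b+1) ∧ Unstable η (b+2) ∧ Unstable η (b+3) := by
      intro b hb
      obtain ⟨p, hp, rfl⟩ := hBfS b hb
      have hstab : ¬ Unstable η p.2 := hp.2.1 p.2 hp.1 le_rfl
      have h1 := hp.2.2.2
      have h23 := rkey η p.2 hstab h1
      exact ⟨h1, h23.1, h23.2⟩
    -- all three shifted sites of any c ∈ B' are unstable
    have hmemU : ∀ c ∈ B', ∀ i : ℤ, 1 ≤ i → i ≤ 3 → Unstable η (c + i) := by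
      intro c hc i hi1 hi2
      rcases Finset.mem_insert.mp hc with rfl | hc
      · have hstab : ¬ Unstable η a₀ := hp₀.2.1 a₀ le_rfl hp₀.1
        have h1 : Unstable η (a₀ - 1) := hp₀.2.2.1
        have h23 := lkey η a₀ hstab h1
        interval_cases i
        · rw [show a₀ - 4 + 1 = a₀ - 3 by ring]; exact h23.2
        · rw [show a₀ - 4 + 2 = a₀ - 2 by ring]; exact h23.1
        · rw [show a₀ - 4 + 3 = a₀ - 1 by ring]; exact h1
      · have := hBfU c hc
        interval_cases i
        · exact this.1
        · exact this.2.1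
        · exact this.2.2
    -- separation
    have hsep : ∀ c ∈ B', ∀ c' ∈ B', c < c' → c + 3 ≤ c' := by
      intro c hc c' hc' hlt
      rcases Finset.mem_insert.mp hc with rfl | hc
      · rcases Finset.mem_insert.mp hc' with rfl | hc'
        · omega
        · have := hBfge c' hc'; omega
      · rcases Finset.mem_insert.mp hc' with rfl | hc'
        · have := hBfge c hc; omega
        · -- both right endpoints, c < c'
          obtain ⟨q, hq, rfl⟩ := hBfS c' hc'
          have h12 := hBfU c hc
          by_contra hcon
          push_neg at hcon
          have hstab : ¬ Unstable η q.2 := hq.2.1 q.2 hq.1 le_rfl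
          have hq2 : q.2 = c + 1 ∨ q.2 = c + 2 := by omega
          rcases hq2 with h | h
          · rw [h] at hstab; exact hstab h12.1
          · rw [h] at hstab; exact hstab h12.2.1
    have hnotmem : a₀ - 4 ∉ Bf := fun h => by have := hBfge _ h; omega
    have hB'card : B'.card = Bf.card + 1 := Finset.card_insert_of_notMem hnotmem
    have hBfcard : Bf.card = F.card := Finset.card_image_of_injOn (by
      intro p hp q hq hpq
      exact sndInj p ((hFmem p).mp hp) q ((hFmem q).mp hq) hpq)
    have hcount : (B' ×ˢ ({1,2,3} : Finset ℤ)).card ≤ hfin.toFinset.card := by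
      apply Finset.card_le_card_of_injOn (fun ci => ci.1 + ci.2)
      · rintro ⟨c, i⟩ hci
        rw [Finset.mem_coe, Finset.mem_product] at hci
        have hi : i = 1 ∨ i = 2 ∨ i = 3 := by simpa using hci.2
        rw [Finset.mem_coe, Set.Finite.mem_toFinset]
        exact hmemU c hci.1 i (by omega) (by omega)
      · rintro ⟨c, i⟩ hci ⟨c', j⟩ hcj h
        rw [Finset.mem_coe, Finset.mem_product] at hci hcj
        simp only at h
        have hi : i = 1 ∨ i = 2 ∨ i = 3 := by simpa using hci.2
        have hj : j = 1 ∨ j = 2 ∨ j = 3 := by simpa using hcj.2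
        have hcc : c = c' := by
          by_contra hne
          rcases lt_or_gt_of_ne hne with hlt | hlt
          · have := hsep c hci.1 c' hcj.1 hlt; omega
          · have := hsep c' hcj.1 c hci.1 hlt; omega
        subst hcc
        have : i = j := by omega
        simp [this]
    have hprodcard : (B' ×ˢ ({1,2,3} : Finset ℤ)).card = B'.card * 3 := by
      rw [Finset.card_product]
      norm_num
    have hScard : S.ncard = F.card := Set.ncard_eq_toFinset_card S hSfin
    have hUcard : {x : ℤ | Unstable η x}.ncard = hfin.toFinset.card :=
      Set.ncard_eq_toFinset_card _ hfin
    have hmain : 3 * (S.ncard + 1) ≤ {x : ℤ | Unstable η x}.ncard := by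
      rw [hScard, hUcard]
      omega
    have hmainR : (3 : ℝ) * (S.ncard + 1) ≤ ({x : ℤ | Unstable η x}.ncard : ℝ) := by
      exact_mod_cast hmain
    linarith
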